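/- arXiv:2402.11387 — 3 statements merged into one kernel-verified Lean document; each statement's English description precedes it below -/
import Mathlib

section
/- Let H be a graph with at least one edge and no isolated edges, let k0 be the minimum over all edges uv of H of max{d_H(u), d_H(v)} − 1, and let k1' be the minimum of wt1(uv) over all edges uv of H with wt0(uv) = k0. Then in any H-saturated graph G, the set of vertices of G of degree at most k0 having no neighbor of degree at least k1' forms a clique. -/
open SimpleGraph

/-- `G` contains a subgraph isomorphic to `H`. -/
def ContainsCopy {α β : Type*} (G : SimpleGraph α) (H : SimpleGraph β) : Prop :=
  ∃ f : β → α, Function.Injective f ∧ ∀ ⦃u v : β⦄, H.Adj u v → G.Adj (f u) (f v)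

/-- `G` is `H`-saturated: `G` is `H`-free but adding any edge creates a copy of `H`. -/
def IsSat {α β : Type*} (G : SimpleGraph α) (H : SimpleGraph β) : Prop :=
  ¬ ContainsCopy G H ∧
    ∀ x y : α, x ≠ y → ¬ G.Adj x y →
      ContainsCopy (G ⊔ SimpleGraph.fromEdgeSet {Sym2.mk x y}) H

/-- The degree of a vertex. -/
noncomputable def deg {α : Type*} (G : SimpleGraph α) (v : α) : ℕ :=
  (G.neighborSet v).ncard

/-- `wt0 uv = max (d u) (d v) - 1`. -/
noncomputable def wt0 {β : Type*} (H : SimpleGraph β) (u v : β) : ℕ :=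
  max (deg H u) (deg H v) - 1

/-- The neighborhood of the edge `uv`: `(N(u) - v) ∪ (N(v) - u)`. -/
def edgeNbhd {β : Type*} (H : SimpleGraph β) (u v : β) : Set β :=
  (H.neighborSet u \ {v}) ∪ (H.neighborSet v \ {u})

/-- `wt1 uv`: the maximum degree of a vertex in the neighborhood of the edge `uv`. -/
noncomputable def wt1 {β : Type*} (H : SimpleGraph β) (u v : β) : ℕ :=
  sSup (deg H '' edgeNbhd H u v)

/-- `k0`: the minimum of `wt0` over the edges of `H`. -/
noncomputable def paramK0 {β : Type*} (H : SimpleGraph β) : ℕ :=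
  sInf {k | ∃ u v, H.Adj u v ∧ wt0 H u v = k}

/-- `k1`: the minimum of `wt1` over the edges of `H`. -/
noncomputable def paramK1 {β : Type*} (H : SimpleGraph β) : ℕ :=
  sInf {k | ∃ u v, H.Adj u v ∧ wt1 H u v = k}

/-- `k1'`: the minimum of `wt1` over the edges of `H` minimizing `wt0`. -/
noncomputable def paramK1p {β : Type*} (H : SimpleGraph β) : ℕ :=
  sInf {k | ∃ u v, H.Adj u v ∧ wt0 H u v = paramK0 H ∧ wt1 H u v = k}

/-- `k0'`: the minimum of `wt0` over the edges of `H` minimizing `wt1`. -/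
noncomputable def paramK0p {β : Type*} (H : SimpleGraph β) : ℕ :=
  sInf {k | ∃ u v, H.Adj u v ∧ wt1 H u v = paramK1 H ∧ wt0 H u v = k}


private lemma deg_le_of_copy {α β : Type*} [Fintype α] {G : SimpleGraph α} {H : SimpleGraph β}
    {f : β → α} (hinj : Function.Injective f)
    (hmap : ∀ ⦃u v : β⦄, H.Adj u v → G.Adj (f u) (f v)) (a : β) :
    deg H a ≤ deg G (f a) := by
  have hsub : f '' H.neighborSet a ⊆ G.neighborSet (f a) := by
    rintro _ ⟨b, hb, rfl⟩; exact hmap hb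
  calc deg H a = (f '' H.neighborSet a).ncard :=
        (Set.ncard_image_of_injective _ hinj).symm
    _ ≤ _ := Set.ncard_le_ncard hsub (Set.toFinite _)

private lemma nbhd_sup_self {α : Type*} (G : SimpleGraph α) {x y : α} (hne : x ≠ y) :
    (G ⊔ SimpleGraph.fromEdgeSet {Sym2.mk x y}).neighborSet x
      = insert y (G.neighborSet x) := by
  ext z
  simp only [SimpleGraph.mem_neighborSet, SimpleGraph.sup_adj, SimpleGraph.fromEdgeSet_adj,
    Set.mem_singleton_iff, Set.mem_insert_iff, Sym2.eq_iff]
  constructor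
  · rintro (h | ⟨(⟨-, rfl⟩ | ⟨rfl, rfl⟩), hne2⟩)
    · exact Or.inr h
    · exact Or.inl rfl
    · exact absurd rfl hne
  · rintro (rfl | h)
    · exact Or.inr ⟨Or.inl ⟨by trivial, rfl⟩, hne⟩
    · exact Or.inl h

private lemma nbhd_sup_other {α : Type*} (G : SimpleGraph α) {x y w : α}
    (hwx : w ≠ x) (hwy : w ≠ y) :
    (G ⊔ SimpleGraph.fromEdgeSet {Sym2.mk x y}).neighborSet w = G.neighborSet w := by
  ext z
  simp only [SimpleGraph.mem_neighborSet, SimpleGraph.sup_adj, SimpleGraph.fromEdgeSet_adj,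
    Set.mem_singleton_iff, Sym2.eq_iff]
  constructor
  · rintro (h | ⟨(⟨rfl, rfl⟩ | ⟨rfl, rfl⟩), hne2⟩)
    · exact h
    · exact absurd rfl hwx
    · exact absurd rfl hwy
  · exact Or.inl

private lemma key {α β : Type*} [Fintype α] [Fintype β] (H : SimpleGraph β)
    (hiso : ∀ u v, H.Adj u v → (edgeNbhd H u v).Nonempty)
    (G : SimpleGraph α) {x y : α}
    (hx1 : deg G x ≤ paramK0 H) (hx2 : ∀ w, G.Adj x w → deg G w < paramK1p H)
    (hy1 : deg G y ≤ paramK0 H) (hy2 : ∀ w, G.Adj y w → deg G w < paramK1p H)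
    (hne : x ≠ y) (hnadj : ¬ G.Adj x y)
    (f : β → α) (hinj : Function.Injective f)
    (hmap : ∀ ⦃u v : β⦄, H.Adj u v →
      (G ⊔ SimpleGraph.fromEdgeSet {Sym2.mk x y}).Adj (f u) (f v))
    (u v : β) (huv : H.Adj u v) (hux : f u = x) (hvy : f v = y) : False := by
  set G' := G ⊔ SimpleGraph.fromEdgeSet {Sym2.mk x y} with hG'
  -- degrees in G'
  have hdegx : deg G' x = deg G x + 1 := by
    have hyn : y ∉ G.neighborSet x := hnadj
    rw [deg, nbhd_sup_self G hne, Set.ncard_insert_of_notMem hyn (Set.toFinite _)]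
    rfl
  have hdegy : deg G' y = deg G y + 1 := by
    have hxn : x ∉ G.neighborSet y := fun h => hnadj h.symm
    have hswap : (Sym2.mk x y : Sym2 α) = Sym2.mk y x := Sym2.eq_swap.symm
    rw [deg, hG', hswap, nbhd_sup_self G hne.symm,
      Set.ncard_insert_of_notMem hxn (Set.toFinite _)]
    rfl
  have hu_le : deg H u ≤ deg G x + 1 := by
    have := deg_le_of_copy hinj hmap u
    rw [hux, hdegx] at this; exact this
  have hv_le : deg H v ≤ deg G y + 1 := by
    have := deg_le_of_copy hinj hmap v
    rw [hvy, hdegy] at this; exact this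
  -- wt0 H u v = paramK0 H
  have hwt0_le : wt0 H u v ≤ paramK0 H := by
    have h1 : deg H u ≤ paramK0 H + 1 := hu_le.trans (by omega)
    have h2 : deg H v ≤ paramK0 H + 1 := hv_le.trans (by omega)
    unfold wt0; omega
  have hwt0 : wt0 H u v = paramK0 H :=
    le_antisymm hwt0_le (Nat.sInf_le ⟨u, v, huv, rfl⟩)
  -- k1' ≤ wt1 H u v
  have hk1p : paramK1p H ≤ wt1 H u v := Nat.sInf_le ⟨u, v, huv, hwt0, rfl⟩
  -- wt1 is attained
  have himg : (deg H '' edgeNbhd H u v).Nonempty := (hiso u v huv).image _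
  have hmem : wt1 H u v ∈ deg H '' edgeNbhd H u v :=
    Set.Nonempty.csSup_mem himg (Set.toFinite _)
  obtain ⟨w, hw, hdw⟩ := hmem
  have hwdeg : paramK1p H ≤ deg H w := hdw ▸ hk1p
  -- f w is not x nor y
  rcases hw with hw | hw
  · obtain ⟨hwadj, hwv⟩ := hw
    have hwu : w ≠ u := fun h => H.irrefl (h ▸ hwadj)
    have hfwx : f w ≠ x := fun h => hwu (hinj (h.trans hux.symm))
    have hfwy : f w ≠ y := fun h => hwv (hinj (h.trans hvy.symm))
    have hadj' : G'.Adj x (f w) := hux ▸ hmap hwadj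
    have hadjG : G.Adj x (f w) := by
      rcases hadj' with h | h
      · exact h
      · exfalso
        rcases (Sym2.eq_iff.mp (Set.mem_singleton_iff.mp h.1)) with ⟨_, h2⟩ | ⟨h1, _⟩
        · exact hfwy h2
        · exact hne h1
    have hlt := hx2 (f w) hadjG
    have hge := deg_le_of_copy hinj hmap w
    have heq : deg (G ⊔ SimpleGraph.fromEdgeSet {Sym2.mk x y}) (f w) = deg G (f w) := by
      unfold deg; rw [nbhd_sup_other G hfwx hfwy]
    rw [hG'] at hge
    omega
  · obtain ⟨hwadj, hwu⟩ := hw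
    have hwv : w ≠ v := fun h => H.irrefl (h ▸ hwadj)
    have hfwx : f w ≠ x := fun h => hwu (hinj (h.trans hux.symm))
    have hfwy : f w ≠ y := fun h => hwv (hinj (h.trans hvy.symm))
    have hadj' : G'.Adj y (f w) := hvy ▸ hmap hwadj
    have hadjG : G.Adj y (f w) := by
      rcases hadj' with h | h
      · exact h
      · exfalso
        rcases (Sym2.eq_iff.mp (Set.mem_singleton_iff.mp h.1)) with ⟨h1, _⟩ | ⟨_, h2⟩
        · exact hne h1.symm
        · exact hfwx h2
    have hlt := hy2 (f w) hadjG
    have hge := deg_le_of_copy hinj hmap w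
    have heq : deg (G ⊔ SimpleGraph.fromEdgeSet {Sym2.mk x y}) (f w) = deg G (f w) := by
      unfold deg; rw [nbhd_sup_other G hfwx hfwy]
    rw [hG'] at hge
    omega

/-- Prop. (neighbor clique, part 2): in an `H`-saturated graph, the vertices of degree at
most `k0` having no neighbor of degree at least `k1'` form a clique. -/
theorem stmt2 {α β : Type*} [Fintype α] [Fintype β] (H : SimpleGraph β)
    (hedge : ∃ u v, H.Adj u v)
    (hiso : ∀ u v, H.Adj u v → (edgeNbhd H u v).Nonempty)
    (G : SimpleGraph α) (hG : IsSat G H) :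
    ∀ x y : α,
      deg G x ≤ paramK0 H → (∀ w, G.Adj x w → deg G w < paramK1p H) →
      deg G y ≤ paramK0 H → (∀ w, G.Adj y w → deg G w < paramK1p H) →
      x ≠ y → G.Adj x y := by
  intro x y hx1 hx2 hy1 hy2 hne
  by_contra hnadj
  obtain ⟨f, hinj, hmap⟩ := hG.2 x y hne hnadj
  -- some H-edge must map to the new edge xy
  have hnot : ¬ ∀ ⦃u v : β⦄, H.Adj u v → G.Adj (f u) (f v) := by
    intro h; exact hG.1 ⟨f, hinj, h⟩
  push_neg at hnot
  obtain ⟨u, v, huv, hnG⟩ := hnot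
  have hadj' := hmap huv
  rcases hadj' with h | h
  · exact hnG h
  · rcases (Sym2.eq_iff.mp (Set.mem_singleton_iff.mp h.1)) with ⟨h1, h2⟩ | ⟨h1, h2⟩
    · exact key H hiso G hx1 hx2 hy1 hy2 hne hnadj f hinj hmap u v huv h1 h2
    · have hswap : (Sym2.mk x y : Sym2 α) = Sym2.mk y x := Sym2.eq_swap.symm
      rw [hswap] at hmap
      exact key H hiso G hy1 hy2 hx1 hx2 hne.symm (fun h => hnadj h.symm)
        f hinj hmap u v huv h1 h2
end

section
/- Let δ and k be positive integers with δ < k. If G is a nonempty graph with minimum degree δ in which every vertex of degree exactly δ has a neighbor of degree at least k, then the average degree of G satisfies d(G) ≥ δ + (k − δ)/(k + 1). -/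
open SimpleGraph

/-- Prop. warmup, first part: if `G` has minimum degree `δ` and every degree-`δ` vertex has
a neighbor of degree at least `k > δ`, then `d(G) ≥ δ + (k - δ)/(k + 1)`. -/
theorem stmt4 {α : Type*} [Fintype α] [Nonempty α] (δ k : ℕ)
    (hδ : 0 < δ) (hδk : δ < k) (G : SimpleGraph α)
    (hmin : (∀ v, δ ≤ deg G v) ∧ ∃ v, deg G v = δ)
    (hnbr : ∀ v, deg G v = δ → ∃ w, G.Adj v w ∧ k ≤ deg G w) :
    (δ : ℝ) + ((k : ℝ) - (δ : ℝ)) / ((k : ℝ) + 1) ≤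
      (∑ v : α, (deg G v : ℝ)) / (Fintype.card α : ℝ) := by

  classical
  obtain ⟨hminle, -⟩ := hmin
  have hdeg : ∀ v, deg G v = G.degree v := fun v => by
    simp [deg, SimpleGraph.degree, SimpleGraph.neighborFinset,
      Set.ncard_eq_toFinset_card']
  set S : Finset α := Finset.univ.filter (fun v => deg G v = δ) with hS
  set B : Finset α := Finset.univ.filter (fun v => k ≤ deg G v) with hB
  set M : Finset α := Finset.univ.filter (fun v => deg G v ≠ δ ∧ deg G v < k) with hM
  choose f hf1 hf2 using hnbr
  set g : α → α := fun v => if h : deg G v = δ then f v h else v with hg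
  have hmap : ∀ v ∈ S, g v ∈ B := by
    intro v hv
    simp only [hS, Finset.mem_filter] at hv
    simp only [hg, hv.2, dif_pos, hB, Finset.mem_filter, Finset.mem_univ, true_and]
    exact hf2 v hv.2
  have hST : S.card ≤ ∑ w ∈ B, deg G w := by
    rw [Finset.card_eq_sum_card_fiberwise hmap]
    apply Finset.sum_le_sum
    intro w hw
    have hsub : S.filter (fun v => g v = w) ⊆ G.neighborFinset w := by
      intro v hv
      simp only [Finset.mem_filter, hS, Finset.mem_univ, true_and] at hv
      obtain ⟨hvδ, hgv⟩ := hv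
      have hadj : G.Adj v (g v) := by
        simp only [hg, hvδ, dif_pos]; exact hf1 v hvδ
      rw [hgv] at hadj
      exact (G.mem_neighborFinset w v).2 hadj.symm
    calc (S.filter (fun v => g v = w)).card ≤ (G.neighborFinset w).card :=
          Finset.card_le_card hsub
      _ = deg G w := (hdeg w).symm
  have hkB : k * B.card ≤ ∑ w ∈ B, deg G w := by
    rw [mul_comm, ← smul_eq_mul]
    apply Finset.card_nsmul_le_sum
    intro x hx
    simp only [hB, Finset.mem_filter] at hx
    exact hx.2
  have hdisj1 : Disjoint S M := by
    rw [Finset.disjoint_left]; intro a ha hb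
    simp only [hS, hM, Finset.mem_filter] at ha hb; exact hb.2.1 ha.2
  have hdisj2 : Disjoint (S ∪ M) B := by
    rw [Finset.disjoint_left]; intro a ha hb
    simp only [hS, hM, hB, Finset.mem_filter, Finset.mem_union] at ha hb
    rcases ha with h | h
    · omega
    · omega
  have huniv : S ∪ M ∪ B = Finset.univ := by
    ext v
    simp only [hS, hM, hB, Finset.mem_union, Finset.mem_filter, Finset.mem_univ, true_and,
      iff_true]
    omega
  have hsum : ∑ v : α, deg G v = ∑ v ∈ S, deg G v + ∑ v ∈ M, deg G v + ∑ v ∈ B, deg G v := by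
    rw [← Finset.sum_union hdisj1, ← Finset.sum_union hdisj2, huniv]
  have hcard : Fintype.card α = S.card + M.card + B.card := by
    rw [← Finset.card_union_of_disjoint hdisj1, ← Finset.card_union_of_disjoint hdisj2, huniv,
      Finset.card_univ]
  have hSsum : ∑ v ∈ S, deg G v = δ * S.card := by
    rw [Finset.sum_congr rfl (fun v hv => by
      simp only [hS, Finset.mem_filter] at hv; exact hv.2)]
    simp [mul_comm]
  have hMsum : (δ + 1) * M.card ≤ ∑ v ∈ M, deg G v := by
    rw [mul_comm, ← smul_eq_mul]
    apply Finset.card_nsmul_le_sum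
    intro x hx
    simp only [hM, Finset.mem_filter] at hx
    have := hminle x
    omega
  -- key natural number inequality
  have key : k * (δ + 1) * Fintype.card α ≤ (k + 1) * ∑ v : α, deg G v := by
    have h1 : (k : ℤ) * (δ + 1) * (S.card + M.card + B.card) ≤
        (k + 1) * (δ * S.card + (δ + 1) * M.card + ∑ w ∈ B, deg G w) := by
      have hST' : (S.card : ℤ) ≤ ∑ w ∈ B, deg G w := by exact_mod_cast hST
      have hkB' : (k : ℤ) * B.card ≤ ∑ w ∈ B, deg G w := by exact_mod_cast hkB
      have hδk' : (δ : ℤ) < k := by exact_mod_cast hδk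
      have hδ' : (0 : ℤ) ≤ δ := by positivity
      nlinarith [mul_le_mul_of_nonneg_left hST' (by linarith : (0:ℤ) ≤ (k : ℤ) - δ),
        mul_le_mul_of_nonneg_left hkB' (by linarith : (0:ℤ) ≤ (δ : ℤ) + 1)]
    have h2 : δ * S.card + (δ + 1) * M.card + ∑ w ∈ B, deg G w ≤ ∑ v : α, deg G v := by
      rw [hsum, hSsum]
      omega
    have h2' : ((δ : ℤ) * S.card + (δ + 1) * M.card + ∑ w ∈ B, deg G w : ℤ) ≤
        (∑ v : α, deg G v : ℕ) := by exact_mod_cast h2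
    have := hcard
    zify
    calc (k : ℤ) * (δ + 1) * Fintype.card α
        = (k : ℤ) * (δ + 1) * (S.card + M.card + B.card) := by rw [hcard]; push_cast; ring
      _ ≤ (k + 1) * (δ * S.card + (δ + 1) * M.card + ∑ w ∈ B, deg G w) := h1
      _ ≤ (k + 1) * (∑ v : α, deg G v : ℕ) := by
          apply mul_le_mul_of_nonneg_left h2' (by positivity)
      _ = (k + 1) * ∑ v : α, ((deg G v : ℕ) : ℤ) := by rw [Nat.cast_sum]
  -- convert to ℝ
  have hn : (0 : ℝ) < Fintype.card α := by
    exact_mod_cast Fintype.card_pos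
  rw [le_div_iff₀ hn]
  have hkey : ((k : ℝ) * (δ + 1) * Fintype.card α) ≤ (k + 1) * ∑ v : α, (deg G v : ℝ) := by
    have := key
    have h := (Nat.cast_le (α := ℝ)).2 key
    push_cast at h
    convert h using 2 <;> push_cast <;> ring
  have hk1 : (0 : ℝ) < (k : ℝ) + 1 := by positivity
  have hexp : (δ : ℝ) + ((k : ℝ) - δ) / ((k : ℝ) + 1) =
      (k : ℝ) * ((δ : ℝ) + 1) / ((k : ℝ) + 1) := by
    field_simp
    ring
  rw [hexp, div_mul_eq_mul_div, div_le_iff₀ hk1]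
  calc (k : ℝ) * ((δ : ℝ) + 1) * Fintype.card α
      = (k : ℝ) * (δ + 1) * Fintype.card α := by ring
    _ ≤ (k + 1) * ∑ v : α, (deg G v : ℝ) := hkey
    _ = (∑ v : α, (deg G v : ℝ)) * ((k : ℝ) + 1) := by ring
end

section
/- Let k0 and k1' be positive integers with k0 < k1', and let G be a graph with property (P) with respect to k0 and k1'. Then the set of vertices v of G with d_G(v) ≤ k0 such that either (i) v has no neighbor of degree at least k1', or (ii) v has exactly one neighbor w of degree at least k1', with d_G(w) = k1' and N_G(v) ∩ N_G(w) ≠ ∅, forms a clique in G. -/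
open SimpleGraph

/-- Property (P) with respect to positive integers `k0 < k1'`. -/
def PropertyP {α : Type*} (G : SimpleGraph α) (k0 k1p : ℕ) : Prop :=
  ∀ x y : α, x ≠ y → ¬ G.Adj x y →
    deg G x ≤ k0 → deg G y ≤ k0 →
    (∃ z ∈ G.neighborSet x,
      k1p ≤ (G.neighborSet z \ (G.neighborSet x ∪ {y})).ncard) ∨
    (∃ z' ∈ G.neighborSet y,
      k1p ≤ (G.neighborSet z' \ (G.neighborSet y ∪ {x})).ncard)

lemma stmt11_aux {α : Type*} [Fintype α] (k1p : ℕ) (G : SimpleGraph α) (x y : α)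
    (hx2 : (∀ w, G.Adj x w → deg G w < k1p) ∨
          ∃ w, G.Adj x w ∧ k1p ≤ deg G w ∧
            (∀ w', G.Adj x w' → k1p ≤ deg G w' → w' = w) ∧
            deg G w = k1p ∧ (G.neighborSet x ∩ G.neighborSet w).Nonempty)
    (h : ∃ z ∈ G.neighborSet x,
      k1p ≤ (G.neighborSet z \ (G.neighborSet x ∪ {y})).ncard) : False := by
  obtain ⟨z, hz, hcard⟩ := h
  have hfin : (G.neighborSet z).Finite := Set.toFinite _
  have hsub : G.neighborSet z \ (G.neighborSet x ∪ {y}) ⊆ G.neighborSet z :=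
    Set.diff_subset
  have hk1 : k1p ≤ deg G z := le_trans hcard (Set.ncard_le_ncard hsub hfin)
  rcases hx2 with hall | ⟨w, hw, _, huniq, hdegw, u, hu⟩
  · exact absurd hk1 (not_le.mpr (hall z hz))
  · have hzw : z = w := huniq z hz hk1
    subst hzw
    have hu1 : u ∈ G.neighborSet x := hu.1
    have hu2 : u ∈ G.neighborSet z := hu.2
    have hsub2 : G.neighborSet z \ (G.neighborSet x ∪ {y}) ⊆ G.neighborSet z \ {u} := by
      intro a ha
      exact ⟨ha.1, fun hau => ha.2 (Or.inl (hau ▸ hu1))⟩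
    have hlt : (G.neighborSet z \ {u}).ncard < (G.neighborSet z).ncard :=
      Set.ncard_diff_singleton_lt_of_mem hu2 hfin
    have := le_trans hcard (Set.ncard_le_ncard hsub2 (Set.toFinite _))
    unfold deg at hdegw
    omega

/-- Prop. (triangle-free neighbor clique): in a graph with property (P), the low-degree
vertices satisfying (i) or (ii) form a clique. -/
theorem stmt11 {α : Type*} [Fintype α] (k0 k1p : ℕ) (hk0 : 0 < k0) (hk : k0 < k1p)
    (G : SimpleGraph α) (hP : PropertyP G k0 k1p) :
    ∀ x y : α,
      (deg G x ≤ k0 ∧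
        ((∀ w, G.Adj x w → deg G w < k1p) ∨
          ∃ w, G.Adj x w ∧ k1p ≤ deg G w ∧
            (∀ w', G.Adj x w' → k1p ≤ deg G w' → w' = w) ∧
            deg G w = k1p ∧ (G.neighborSet x ∩ G.neighborSet w).Nonempty)) →
      (deg G y ≤ k0 ∧
        ((∀ w, G.Adj y w → deg G w < k1p) ∨
          ∃ w, G.Adj y w ∧ k1p ≤ deg G w ∧
            (∀ w', G.Adj y w' → k1p ≤ deg G w' → w' = w) ∧
            deg G w = k1p ∧ (G.neighborSet y ∩ G.neighborSet w).Nonempty)) →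
      x ≠ y → G.Adj x y := by
  intro x y hx hy hne
  by_contra hadj
  rcases hP x y hne hadj hx.1 hy.1 with h | h
  · exact stmt11_aux k1p G x y hx.2 h
  · exact stmt11_aux k1p G y x hy.2 h
end
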